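/- There exist a commutative ring R, an ideal I, an R-linear map φ : N → N' and an R-module B such that I annihilates ker φ and coker φ, but I does not annihilate ker(φ ⊗ B). Concretely: let R = k[a,b,c]/(a², ab) for a field k, I = (a), φ : R² → R given by φ(e₁) = a, φ(e₂) = b, and B = R/(ac+bc); then (c,c) ∈ ker(φ ⊗ B) but I·(c,c) ≠ 0 in B². -/

import Mathlib

set_option synthInstance.maxHeartbeats 1000000
set_option maxHeartbeats 1000000

/-!
STATEMENT 1 (Example 4.2): `R = k[a,b,c]/(a²,ab)`, `I = (a)`,
`φ : R² → R`, `φ(e₁) = a`, `φ(e₂) = b`, `B = R/(ac+bc)`.  Then `I` annihilates `ker φ`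
and `coker φ`, the element `(c,c) ⊗ 1` lies in `ker (φ ⊗ B)`, but `I` does not
annihilate it.
-/

open MvPolynomial TensorProduct DualNumber TrivSqZeroExt

noncomputable section

variable (k : Type) [Field k]

/-- the ideal `(a², ab)` of `k[a,b,c]` (with `a = X 0`, `b = X 1`, `c = X 2`). -/
def Jex : Ideal (MvPolynomial (Fin 3) k) :=
  Ideal.span {(X 0 : MvPolynomial (Fin 3) k) ^ 2, X 0 * X 1}

/-- `R = k[a,b,c]/(a²,ab)`. -/
def Rex := MvPolynomial (Fin 3) k ⧸ Jex k

instance : CommRing (Rex k) := by unfold Rex; infer_instance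

def aex : Rex k := Ideal.Quotient.mk (Jex k) (X 0)
def bex : Rex k := Ideal.Quotient.mk (Jex k) (X 1)
def cex : Rex k := Ideal.Quotient.mk (Jex k) (X 2)

/-- `φ : R² → R` with `φ(e₁) = a`, `φ(e₂) = b`. -/
def φex : (Rex k × Rex k) →ₗ[Rex k] Rex k :=
  LinearMap.coprod (LinearMap.toSpanSingleton (Rex k) (Rex k) (aex k))
    (LinearMap.toSpanSingleton (Rex k) (Rex k) (bex k))

/-- `B = R/(ac+bc)`. -/
def Bex := Rex k ⧸ Ideal.span {aex k * cex k + bex k * cex k}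

instance : CommRing (Bex k) := by unfold Bex; infer_instance
instance : Module (Rex k) (Bex k) := by unfold Bex; infer_instance

/- ### Auxiliary lemmas -/

open DualNumber TrivSqZeroExt in
/-- evaluation `a ↦ ε`, `b ↦ -ε`, `c ↦ X` into the dual numbers over `k[X]`. -/
def ψex : MvPolynomial (Fin 3) k →ₐ[k] DualNumber (Polynomial k) :=
  aeval ![ε, -ε, TrivSqZeroExt.inl Polynomial.X]

lemma primeX0 : Prime (X 0 : MvPolynomial (Fin 3) k) := by
  rw [← MulEquiv.prime_iff (MvPolynomial.finSuccEquiv k 2).toMulEquiv]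
  simpa [MvPolynomial.finSuccEquiv_X_zero] using
    (Polynomial.prime_X : Prime (Polynomial.X : Polynomial (MvPolynomial (Fin 2) k)))

lemma ndvdX1 : ¬ (X 0 : MvPolynomial (Fin 3) k) ∣ X 1 := by
  rintro ⟨q, hq⟩
  have h := congrArg (MvPolynomial.eval (fun i : Fin 3 => if i = 1 then (1 : k) else 0)) hq
  simp at h

lemma Jex_le : Jex k ≤ Ideal.span {(X 0 : MvPolynomial (Fin 3) k)} := by
  rw [Jex, Ideal.span_le]
  rintro x (rfl | rfl) <;> rw [SetLike.mem_coe, Ideal.mem_span_singleton]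
  · exact dvd_pow_self _ two_ne_zero
  · exact dvd_mul_right _ _

lemma keyJ (P Q : MvPolynomial (Fin 3) k)
    (h : P * X 0 + Q * X 1 ∈ Jex k) :
    X 0 * P ∈ Jex k ∧ X 0 * Q ∈ Jex k := by
  have h1 : (X 0 : MvPolynomial (Fin 3) k) ∣ Q * X 1 := by
    have hh := Ideal.mem_span_singleton.mp (Jex_le k h)
    exact (dvd_add_right (dvd_mul_left _ _)).mp hh
  have h2 : (X 0 : MvPolynomial (Fin 3) k) ∣ Q :=
    ((primeX0 k).2.2 _ _ h1).resolve_right (ndvdX1 k)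
  obtain ⟨Q', rfl⟩ := h2
  constructor
  · have hX : X 0 * P = (P * X 0 + (X 0 * Q') * X 1) - (X 0 * X 1) * Q' := by ring
    rw [hX]
    exact sub_mem h (Ideal.mul_mem_right _ _ (Ideal.subset_span (by simp [Jex])))
  · have hX : (X 0 : MvPolynomial (Fin 3) k) * (X 0 * Q') = (X 0) ^ 2 * Q' := by ring
    rw [hX]
    exact Ideal.mul_mem_right _ _ (Ideal.subset_span (by simp [Jex]))

lemma ψex_Jex : ∀ x ∈ Jex k, ψex k x = 0 := by
  have : Jex k ≤ RingHom.ker (ψex k).toRingHom := by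
    rw [Jex, Ideal.span_le]
    rintro x (rfl | rfl) <;>
      simp [RingHom.mem_ker, ψex, map_pow, map_mul, sq, eps_mul_eps]
  exact fun x hx => this hx

/-- the induced map `Rex → k[X][ε]`. -/
def ψRex : Rex k →+* DualNumber (Polynomial k) :=
  Ideal.Quotient.lift (Jex k) (ψex k).toRingHom (ψex_Jex k)

lemma ψRex_a : ψRex k (aex k) = ε := by
  rw [ψRex, aex]; erw [Ideal.Quotient.lift_mk]; simp [ψex]

lemma ψRex_b : ψRex k (bex k) = -ε := by
  rw [ψRex, bex]; erw [Ideal.Quotient.lift_mk]; simp [ψex]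

lemma ψRex_c : ψRex k (cex k) = TrivSqZeroExt.inl Polynomial.X := by
  rw [ψRex, cex]; erw [Ideal.Quotient.lift_mk]; simp [ψex]

lemma ψRex_rel : ψRex k (aex k * cex k + bex k * cex k) = 0 := by
  rw [map_add, map_mul, map_mul, ψRex_a, ψRex_b, ψRex_c]
  ring

/-- the induced map `Bex → k[X][ε]`. -/
def ψBex : Bex k →+* DualNumber (Polynomial k) :=
  Ideal.Quotient.lift (Ideal.span {aex k * cex k + bex k * cex k}) (ψRex k)
    (by
      intro x hx
      obtain ⟨t, rfl⟩ := Ideal.mem_span_singleton.mp hx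
      rw [map_mul, ψRex_rel, zero_mul])

lemma ac_ne_zero :
    (Ideal.Quotient.mk (Ideal.span {aex k * cex k + bex k * cex k}) (aex k * cex k) : Bex k)
      ≠ 0 := by
  intro h0
  have h := congrArg (ψBex k) h0
  erw [map_zero] at h
  have h' : ψRex k (aex k * cex k) = 0 := h
  rw [map_mul, ψRex_a, ψRex_c] at h'
  have hsnd := congrArg TrivSqZeroExt.snd h'
  simp at hsnd

theorem stmt1 :
    (∀ r ∈ Ideal.span {aex k}, ∀ x ∈ LinearMap.ker (φex k), r • x = 0) ∧
    (∀ r ∈ Ideal.span {aex k}, ∀ y : Rex k, r • y ∈ LinearMap.range (φex k)) ∧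
    TensorProduct.map (φex k) (LinearMap.id : Bex k →ₗ[Rex k] Bex k)
      (((cex k, cex k) : Rex k × Rex k) ⊗ₜ[Rex k] (1 : Bex k)) = 0 ∧
    aex k • (((cex k, cex k) : Rex k × Rex k) ⊗ₜ[Rex k] (1 : Bex k)) ≠ 0 := by
  refine ⟨?_, ?_, ?_, ?_⟩
  · -- I kills the kernel
    intro r hr x hx
    obtain ⟨t, rfl⟩ := Ideal.mem_span_singleton.mp hr
    rw [LinearMap.mem_ker] at hx
    obtain ⟨P, hP⟩ := Ideal.Quotient.mk_surjective x.1
    obtain ⟨Q, hQ⟩ := Ideal.Quotient.mk_surjective x.2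
    have hx' : x.1 * aex k + x.2 * bex k = 0 := by
      simpa [φex, LinearMap.toSpanSingleton_apply, smul_eq_mul, mul_comm] using hx
    have hmem : P * X 0 + Q * X 1 ∈ Jex k := by
      rw [← Ideal.Quotient.eq_zero_iff_mem]
      rw [← hP, ← hQ] at hx'
      simp [aex, bex, map_add, map_mul] at hx'; exact hx'
    obtain ⟨hXP, hXQ⟩ := keyJ k P Q hmem
    have h1 : aex k * x.1 = 0 := by
      rw [← hP]
      rw [← Ideal.Quotient.eq_zero_iff_mem] at hXP
      simp [aex, map_mul] at hXP; exact hXP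
    have h2 : aex k * x.2 = 0 := by
      rw [← hQ]
      rw [← Ideal.Quotient.eq_zero_iff_mem] at hXQ
      simp [aex, map_mul] at hXQ; exact hXQ
    have : (aex k * t) • x = (aex k * t * x.1, aex k * t * x.2) := rfl
    rw [this, Prod.mk_eq_zero]
    constructor
    · rw [mul_comm (aex k) t, mul_assoc, h1, mul_zero]
    · rw [mul_comm (aex k) t, mul_assoc, h2, mul_zero]
  · -- I kills the cokernel
    intro r hr y
    obtain ⟨t, rfl⟩ := Ideal.mem_span_singleton.mp hr
    refine ⟨(t * y, 0), ?_⟩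
    simp only [φex, LinearMap.coprod_apply, LinearMap.toSpanSingleton_apply, smul_eq_mul,
      zero_mul, add_zero]
    ring
  · -- (c,c) ⊗ 1 is in the kernel of φ ⊗ B
    rw [TensorProduct.map_tmul, LinearMap.id_apply]
    have h3 : φex k (cex k, cex k) = aex k * cex k + bex k * cex k := by
      simp only [φex, LinearMap.coprod_apply, LinearMap.toSpanSingleton_apply, smul_eq_mul]
      ring
    rw [h3]
    have h4 : (aex k * cex k + bex k * cex k) ⊗ₜ[Rex k] (1 : Bex k)
        = (1 : Rex k) ⊗ₜ[Rex k] ((aex k * cex k + bex k * cex k) • (1 : Bex k)) := by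
      rw [← TensorProduct.smul_tmul, smul_eq_mul, mul_one]
    rw [h4]
    have h5 : (aex k * cex k + bex k * cex k) • (1 : Bex k) = 0 := by
      have : (aex k * cex k + bex k * cex k) • (1 : Bex k)
          = Ideal.Quotient.mk (Ideal.span {aex k * cex k + bex k * cex k})
              (aex k * cex k + bex k * cex k) := by
        show (aex k * cex k + bex k * cex k) •
            (Ideal.Quotient.mk (Ideal.span {aex k * cex k + bex k * cex k}) 1) = _
        refine (congrArg (Ideal.Quotient.mk _) (mul_one _)).trans ?_
        rfl
      rw [this]; erw [Ideal.Quotient.eq_zero_iff_mem]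
      exact Ideal.subset_span rfl
    rw [h5, TensorProduct.tmul_zero]
  · -- I does not kill (c,c) ⊗ 1
    intro h0
    set L : (Rex k × Rex k) ⊗[Rex k] Bex k →ₗ[Rex k] Bex k :=
      (TensorProduct.lid (Rex k) (Bex k)).toLinearMap ∘ₗ
        TensorProduct.map (LinearMap.fst (Rex k) (Rex k) (Rex k)) LinearMap.id with hL
    have h1 := congrArg L h0
    rw [map_zero, map_smul] at h1
    have h2 : L (((cex k, cex k) : Rex k × Rex k) ⊗ₜ[Rex k] (1 : Bex k))
        = cex k • (1 : Bex k) := by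
      rw [hL]
      simp [TensorProduct.lid_tmul]
    rw [h2, smul_smul] at h1
    have h3 : (aex k * cex k) • (1 : Bex k)
        = Ideal.Quotient.mk (Ideal.span {aex k * cex k + bex k * cex k}) (aex k * cex k) := by
      show (aex k * cex k) •
          (Ideal.Quotient.mk (Ideal.span {aex k * cex k + bex k * cex k}) 1) = _
      refine (congrArg (Ideal.Quotient.mk _) (mul_one _)).trans ?_
      rfl
    rw [h3] at h1
    exact ac_ne_zero k h1

end
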